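/- Let Σ be a finite alphabet, c ≥ 1 an integer, ℓ ≥ 2 an even integer, w₁,…,w_ℓ : Σ^c → ℝ weight functions, and A₁,…,A_ℓ ⊆ Σ^c sets of keys. For keys x₁,…,x_ℓ ∈ Σ^c, say that x₁ ⊕ ⋯ ⊕ x_ℓ = ∅ if the symmetric difference of the position-character sets of x₁,…,x_ℓ is empty; equivalently, for every position i ∈ {1,…,c} and every character a ∈ Σ, the number of indices k with (x_k)_i = a is even. Then Σ over all tuples (x₁,…,x_ℓ) ∈ A₁ × ⋯ × A_ℓ with x₁ ⊕ ⋯ ⊕ x_ℓ = ∅ of ∏_{k=1}^ℓ w_k(x_k) is at most ((ℓ−1)!!)^c · ∏_{k=1}^ℓ √(Σ_{x∈A_k} w_k(x)²), where (ℓ−1)!! denotes the double factorial of ℓ−1. -/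

import Mathlib

open Finset
open scoped BigOperators Classical

noncomputable section

lemma sum_update {E Sig : Type} [Fintype E] [DecidableEq E] [Fintype Sig]
    (e₀ : E) (H : (E → Sig) → ℝ) :
    ∑ z : E → Sig, ∑ a : Sig, H (Function.update z e₀ a)
      = (Fintype.card Sig : ℝ) * ∑ z : E → Sig, H z := by
  have hinv : Function.Involutive
      (fun p : (E → Sig) × Sig => (Function.update p.1 e₀ p.2, p.1 e₀)) := by
    rintro ⟨z, a⟩
    simp [Function.update_idem, Function.update_eq_self]
  have h1 : ∑ p : (E → Sig) × Sig, H (Function.update p.1 e₀ p.2)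
      = ∑ p : (E → Sig) × Sig, H p.1 :=
    Fintype.sum_bijective _ hinv.bijective _ _ (fun p => rfl)
  calc ∑ z : E → Sig, ∑ a : Sig, H (Function.update z e₀ a)
      = ∑ p : (E → Sig) × Sig, H (Function.update p.1 e₀ p.2) := by
        rw [Fintype.sum_prod_type]
    _ = ∑ p : (E → Sig) × Sig, H p.1 := h1
    _ = (Fintype.card Sig : ℝ) * ∑ z : E → Sig, H z := by
        rw [Fintype.sum_prod_type]
        simp [Finset.sum_const, mul_comm, Finset.mul_sum]

lemma sum_comp_inj {α β Sig : Type} [Fintype α] [DecidableEq α] [Fintype β] [DecidableEq β] [Fintype Sig]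
    (ι : α → β) (hι : Function.Injective ι) (G : (α → Sig) → ℝ) :
    ∑ z : β → Sig, G (z ∘ ι)
      = (Fintype.card Sig : ℝ) ^ (Fintype.card β - Fintype.card α) * ∑ y : α → Sig, G y := by
  classical
  let esymm : α ⊕ {x : β // x ∉ Set.range ι} ≃ β :=
    (Equiv.sumCongr (Equiv.ofInjective ι hι) (Equiv.refl _)).trans
      (Equiv.sumCompl (fun x => x ∈ Set.range ι))
  have key : ∀ a, esymm (Sum.inl a) = ι a := by
    intro a
    simp [esymm]
  have h1 : ∑ z : β → Sig, G (z ∘ ι)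
      = ∑ g : (α ⊕ {x : β // x ∉ Set.range ι}) → Sig,
          G ((Equiv.arrowCongr esymm (Equiv.refl Sig) g) ∘ ι) :=
    (Equiv.sum_comp (Equiv.arrowCongr esymm (Equiv.refl Sig)) (fun z => G (z ∘ ι))).symm
  have h2 : ∀ g : (α ⊕ {x : β // x ∉ Set.range ι}) → Sig,
      (Equiv.arrowCongr esymm (Equiv.refl Sig) g) ∘ ι = g ∘ Sum.inl := by
    intro g
    funext a
    have : esymm.symm (ι a) = Sum.inl a := by
      rw [← key a, Equiv.symm_apply_apply]
    simp [Equiv.arrowCongr, this]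
  rw [h1]
  simp_rw [h2]
  have h3 : ∑ g : (α ⊕ {x : β // x ∉ Set.range ι}) → Sig, G (g ∘ Sum.inl)
      = ∑ p : (α → Sig) × ({x : β // x ∉ Set.range ι} → Sig),
          G (((Equiv.sumArrowEquivProdArrow α _ Sig).symm p) ∘ Sum.inl) :=
    (Equiv.sum_comp (Equiv.sumArrowEquivProdArrow α _ Sig).symm
      (fun g => G (g ∘ Sum.inl))).symm
  have h4 : ∀ p : (α → Sig) × ({x : β // x ∉ Set.range ι} → Sig),
      ((Equiv.sumArrowEquivProdArrow α _ Sig).symm p) ∘ Sum.inl = p.1 := by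
    intro p
    funext a
    simp [Equiv.sumArrowEquivProdArrow]
  rw [h3]
  simp_rw [h4]
  rw [Fintype.sum_prod_type]
  have hcd : Fintype.card {x : β // x ∉ Set.range ι} = Fintype.card β - Fintype.card α := by
    have h5 : Fintype.card {x : β // x ∈ Set.range ι} = Fintype.card α :=
      Fintype.card_congr (Equiv.ofInjective ι hι).symm
    rw [← h5]
    exact Fintype.card_subtype_compl _
  simp only [Finset.sum_const, Finset.card_univ, nsmul_eq_mul, hcd, Fintype.card_fun]
  rw [← Finset.mul_sum]
  push_cast
  ring


lemma cs_sqrt {ι : Type} [Fintype ι] (p r : ι → ℝ) :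
    ∑ a, p a * r a ≤ Real.sqrt (∑ a, (p a)^2) * Real.sqrt (∑ a, (r a)^2) := by
  have h := Finset.sum_mul_sq_le_sq_mul_sq univ p r
  calc ∑ a, p a * r a ≤ |∑ a, p a * r a| := le_abs_self _
    _ = Real.sqrt ((∑ a, p a * r a)^2) := (Real.sqrt_sq_eq_abs _).symm
    _ ≤ Real.sqrt ((∑ a, (p a)^2) * (∑ a, (r a)^2)) := Real.sqrt_le_sqrt h
    _ = _ := Real.sqrt_mul (by positivity) _

lemma finner_aux {V E Sig : Type} [Fintype V] [Fintype E] [DecidableEq E]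
    [Fintype Sig] [Nonempty Sig] :
    ∀ (n : ℕ) (f : V → (E → Sig) → ℝ) (legs : V → Finset E),
    (∀ v z, 0 ≤ f v z) →
    (∀ v z z', (∀ e ∈ legs v, z e = z' e) → f v z = f v z') →
    (∀ e : E, ((univ : Finset V).filter fun v => e ∈ legs v).card = 2 ∨ ∀ v, e ∉ legs v) →
    ((univ : Finset E).filter fun e => ∃ v, e ∈ legs v).card = n →
    (∑ z : E → Sig, ∏ v, f v z)^2
        * (Fintype.card Sig : ℝ)^(Fintype.card V * Fintype.card E)
      ≤ (Fintype.card Sig : ℝ)^(2 * Fintype.card E)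
        * ∏ v, ∑ z : E → Sig, (f v z)^2 := by
  intro n
  induction n with
  | zero =>
    intro f legs hnn hdep hcard hn
    -- all legs empty
    have hleg : ∀ v e, e ∉ legs v := by
      intro v e he
      have : e ∈ (univ : Finset E).filter fun e => ∃ v, e ∈ legs v := by
        simp only [mem_filter, mem_univ, true_and]; exact ⟨v, he⟩
      rw [Finset.card_eq_zero.mp hn] at this
      exact absurd this (Finset.notMem_empty _)
    obtain ⟨z₀⟩ : Nonempty (E → Sig) := inferInstance
    have hconst : ∀ v z, f v z = f v z₀ := by
      intro v z
      exact hdep v z z₀ (fun e he => absurd he (hleg v e))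
    have h1 : ∑ z : E → Sig, ∏ v, f v z = (Fintype.card Sig : ℝ)^(Fintype.card E) * ∏ v, f v z₀ := by
      calc ∑ z : E → Sig, ∏ v, f v z = ∑ _z : E → Sig, ∏ v, f v z₀ := by
            apply Finset.sum_congr rfl; intro z _
            exact Finset.prod_congr rfl fun v _ => hconst v z
        _ = _ := by
            simp [Finset.sum_const, Fintype.card_fun, nsmul_eq_mul]
    have h2 : ∀ v, ∑ z : E → Sig, (f v z)^2 = (Fintype.card Sig : ℝ)^(Fintype.card E) * (f v z₀)^2 := by
      intro v
      calc ∑ z : E → Sig, (f v z)^2 = ∑ _z : E → Sig, (f v z₀)^2 := by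
            apply Finset.sum_congr rfl; intro z _; rw [hconst v z]
        _ = _ := by simp [Finset.sum_const, Fintype.card_fun, nsmul_eq_mul]
    rw [h1]
    simp_rw [h2]
    rw [Finset.prod_mul_distrib, Finset.prod_const, Finset.prod_pow, Finset.card_univ]
    apply le_of_eq
    ring
  | succ m ih =>
    intro f legs hnn hdep hcard hn
    -- find a used edge
    have hne : ((univ : Finset E).filter fun e => ∃ v, e ∈ legs v).Nonempty := by
      rw [← Finset.card_pos, hn]; omega
    obtain ⟨e₀, he₀⟩ := hne
    obtain ⟨v₀, hv₀⟩ := (Finset.mem_filter.mp he₀).2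
    have hc2 : ((univ : Finset V).filter fun v => e₀ ∈ legs v).card = 2 := by
      rcases hcard e₀ with h | h
      · exact h
      · exact absurd hv₀ (h v₀)
    obtain ⟨u, v, huv, hpair⟩ := Finset.card_eq_two.mp hc2
    have hu : e₀ ∈ legs u := by
      have : u ∈ (univ : Finset V).filter fun w => e₀ ∈ legs w := by
        rw [hpair]; exact Finset.mem_insert_self _ _
      exact (Finset.mem_filter.mp this).2
    have hv : e₀ ∈ legs v := by
      have : v ∈ (univ : Finset V).filter fun w => e₀ ∈ legs w := by
        rw [hpair]; simp
      exact (Finset.mem_filter.mp this).2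
    have hother : ∀ w, w ≠ u → w ≠ v → e₀ ∉ legs w := by
      intro w hwu hwv hw
      have : w ∈ (univ : Finset V).filter fun w' => e₀ ∈ legs w' := by
        simp only [mem_filter, mem_univ, true_and]; exact hw
      rw [hpair] at this
      simp only [Finset.mem_insert, Finset.mem_singleton] at this
      tauto
    set q : ℝ := (Fintype.card Sig : ℝ) with hq
    have hq0 : 0 < q := by
      rw [hq]; exact_mod_cast Fintype.card_pos
    set g : V → (E → Sig) → ℝ := fun w z =>
      if w = u then Real.sqrt (∑ a : Sig, (f u (Function.update z e₀ a))^2)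
      else if w = v then Real.sqrt (∑ a : Sig, (f v (Function.update z e₀ a))^2)
      else f w z with hg
    set legs' : V → Finset E := fun w => (legs w).erase e₀ with hlegs'
    -- facts about g
    have hgnn : ∀ w z, 0 ≤ g w z := by
      intro w z; rw [hg]; dsimp only
      split
      · exact Real.sqrt_nonneg _
      · split
        · exact Real.sqrt_nonneg _
        · exact hnn w z
    have hupd_agree : ∀ (w : V) (z z' : E → Sig), (∀ e ∈ legs' w, z e = z' e) →
        ∀ a, f w (Function.update z e₀ a) = f w (Function.update z' e₀ a) := by
      intro w z z' hzz a
      apply hdep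
      intro e he
      by_cases hee : e = e₀
      · subst hee; simp
      · rw [Function.update_of_ne hee, Function.update_of_ne hee]
        exact hzz e (Finset.mem_erase.mpr ⟨hee, he⟩)
    have hgdep : ∀ w z z', (∀ e ∈ legs' w, z e = z' e) → g w z = g w z' := by
      intro w z z' hzz
      rw [hg]; dsimp only
      by_cases hwu : w = u
      · subst hwu; rw [if_pos rfl, if_pos rfl]
        congr 1
        exact Finset.sum_congr rfl fun a _ => by rw [hupd_agree w z z' hzz a]
      · rw [if_neg hwu, if_neg hwu]
        by_cases hwv : w = v
        · subst hwv; rw [if_pos rfl, if_pos rfl]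
          congr 1
          exact Finset.sum_congr rfl fun a _ => by rw [hupd_agree w z z' hzz a]
        · rw [if_neg hwv, if_neg hwv]
          apply hdep
          intro e he
          by_cases hee : e = e₀
          · subst hee
            exact absurd he (hother w hwu hwv)
          · exact hzz e (Finset.mem_erase.mpr ⟨hee, he⟩)
    have hgcard : ∀ e : E, ((univ : Finset V).filter fun w => e ∈ legs' w).card = 2
        ∨ ∀ w, e ∉ legs' w := by
      intro e
      by_cases hee : e = e₀
      · subst hee
        right; intro w hw
        exact absurd (Finset.mem_erase.mp hw).1 (by simp)
      · have : ∀ w, (e ∈ legs' w) = (e ∈ legs w) := by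
          intro w; rw [hlegs']; simp [Finset.mem_erase, hee]
        simp_rw [this]
        exact hcard e
    have hgn : ((univ : Finset E).filter fun e => ∃ w, e ∈ legs' w).card = m := by
      have heq : ((univ : Finset E).filter fun e => ∃ w, e ∈ legs' w)
          = ((univ : Finset E).filter fun e => ∃ w, e ∈ legs w).erase e₀ := by
        ext e
        simp only [Finset.mem_filter, Finset.mem_erase, Finset.mem_univ, true_and, hlegs',
          Finset.mem_erase]
        constructor
        · rintro ⟨w, hne, hw⟩; exact ⟨hne, w, hw⟩
        · rintro ⟨hne, w, hw⟩; exact ⟨w, hne, hw⟩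
      rw [heq, Finset.card_erase_of_mem he₀, hn]
      omega
    have hvu : v ≠ u := Ne.symm huv
    have hgu_eval : ∀ z, g u z = Real.sqrt (∑ a : Sig, (f u (Function.update z e₀ a))^2) := by
      intro z; simp [hg]
    have hgv_eval : ∀ z, g v z = Real.sqrt (∑ a : Sig, (f v (Function.update z e₀ a))^2) := by
      intro z; simp [hg, hvu]
    have hgw_eval : ∀ w, w ≠ u → w ≠ v → ∀ z, g w z = f w z := by
      intro w hwu hwv z; simp [hg, hwu, hwv]
    have hprodsplit : ∀ h : V → ℝ,
        ∏ w, h w = h u * (h v * ∏ w ∈ (univ.erase u).erase v, h w) := by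
      intro h
      rw [← Finset.mul_prod_erase univ h (mem_univ u),
        ← Finset.mul_prod_erase (univ.erase u) h
          (Finset.mem_erase.mpr ⟨hvu, mem_univ v⟩)]
    have hmem_erase : ∀ w, w ∈ (univ.erase u).erase v → w ≠ u ∧ w ≠ v := by
      intro w hw
      obtain ⟨hwv, hw2⟩ := Finset.mem_erase.mp hw
      exact ⟨(Finset.mem_erase.mp hw2).1, hwv⟩
    have hfupd : ∀ w, w ≠ u → w ≠ v → ∀ z a,
        f w (Function.update z e₀ a) = f w z := by
      intro w hwu hwv z a
      apply hdep
      intro e he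
      have hee : e ≠ e₀ := by
        rintro rfl; exact hother w hwu hwv he
      rw [Function.update_of_ne hee]
    -- step inequality: q * ∑∏f ≤ ∑∏g
    have hstep : q * ∑ z : E → Sig, ∏ w, f w z ≤ ∑ z : E → Sig, ∏ w, g w z := by
      rw [hq, ← sum_update e₀ (fun z => ∏ w, f w z)]
      apply Finset.sum_le_sum
      intro z _
      have hC : (0:ℝ) ≤ ∏ w ∈ (univ.erase u).erase v, f w z :=
        Finset.prod_nonneg fun w _ => hnn w z
      calc ∑ a : Sig, ∏ w, f w (Function.update z e₀ a)
          = ∑ a : Sig, (f u (Function.update z e₀ a) * f v (Function.update z e₀ a))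
              * ∏ w ∈ (univ.erase u).erase v, f w z := by
            apply Finset.sum_congr rfl
            intro a _
            rw [hprodsplit (fun w => f w (Function.update z e₀ a))]
            have : ∏ w ∈ (univ.erase u).erase v, f w (Function.update z e₀ a)
                = ∏ w ∈ (univ.erase u).erase v, f w z := by
              apply Finset.prod_congr rfl
              intro w hw
              obtain ⟨hwu, hwv⟩ := hmem_erase w hw
              exact hfupd w hwu hwv z a
            rw [this]; ring
        _ = (∑ a : Sig, f u (Function.update z e₀ a) * f v (Function.update z e₀ a))
              * ∏ w ∈ (univ.erase u).erase v, f w z := by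
            rw [Finset.sum_mul]
        _ ≤ (g u z * g v z) * ∏ w ∈ (univ.erase u).erase v, f w z := by
            apply mul_le_mul_of_nonneg_right _ hC
            rw [hgu_eval z, hgv_eval z]
            exact cs_sqrt _ _
        _ = ∏ w, g w z := by
            rw [hprodsplit (fun w => g w z)]
            have : ∏ w ∈ (univ.erase u).erase v, g w z
                = ∏ w ∈ (univ.erase u).erase v, f w z := by
              apply Finset.prod_congr rfl
              intro w hw
              obtain ⟨hwu, hwv⟩ := hmem_erase w hw
              exact hgw_eval w hwu hwv z
            rw [this]; ring
    -- squared sums of g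
    have hgu2 : ∑ z : E → Sig, (g u z)^2 = q * ∑ z : E → Sig, (f u z)^2 := by
      have h1 : ∀ z : E → Sig, (g u z)^2 = ∑ a : Sig, (f u (Function.update z e₀ a))^2 := by
        intro z
        rw [hgu_eval z, Real.sq_sqrt (Finset.sum_nonneg fun a _ => sq_nonneg _)]
      simp_rw [h1]
      rw [hq]
      exact sum_update e₀ (fun z => (f u z)^2)
    have hgv2 : ∑ z : E → Sig, (g v z)^2 = q * ∑ z : E → Sig, (f v z)^2 := by
      have h1 : ∀ z : E → Sig, (g v z)^2 = ∑ a : Sig, (f v (Function.update z e₀ a))^2 := by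
        intro z
        rw [hgv_eval z, Real.sq_sqrt (Finset.sum_nonneg fun a _ => sq_nonneg _)]
      simp_rw [h1]
      rw [hq]
      exact sum_update e₀ (fun z => (f v z)^2)
    have hprodg : ∏ w, ∑ z : E → Sig, (g w z)^2
        = q^2 * ∏ w, ∑ z : E → Sig, (f w z)^2 := by
      rw [hprodsplit (fun w => ∑ z : E → Sig, (g w z)^2),
        hprodsplit (fun w => ∑ z : E → Sig, (f w z)^2)]
      have : ∏ w ∈ (univ.erase u).erase v, ∑ z : E → Sig, (g w z)^2
          = ∏ w ∈ (univ.erase u).erase v, ∑ z : E → Sig, (f w z)^2 := by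
        apply Finset.prod_congr rfl
        intro w hw
        obtain ⟨hwu, hwv⟩ := hmem_erase w hw
        exact Finset.sum_congr rfl fun z _ => by rw [hgw_eval w hwu hwv z]
      rw [this, hgu2, hgv2]; ring
    have hIH := ih g legs' hgnn hgdep hgcard hgn
    rw [hprodg] at hIH
    have hSf : (0:ℝ) ≤ ∑ z : E → Sig, ∏ w, f w z :=
      Finset.sum_nonneg fun z _ => Finset.prod_nonneg fun w _ => hnn w z
    have h2 : (q * ∑ z : E → Sig, ∏ w, f w z)^2
        * q^(Fintype.card V * Fintype.card E)
        ≤ (∑ z : E → Sig, ∏ w, g w z)^2 * q^(Fintype.card V * Fintype.card E) := by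
      apply mul_le_mul_of_nonneg_right _ (by positivity)
      exact pow_le_pow_left₀ (by positivity) hstep 2
    have h3 : q^2 * ((∑ z : E → Sig, ∏ w, f w z)^2
        * q^(Fintype.card V * Fintype.card E))
        ≤ q^2 * (q^(2 * Fintype.card E) * ∏ w, ∑ z : E → Sig, (f w z)^2) := by
      calc q^2 * ((∑ z : E → Sig, ∏ w, f w z)^2 * q^(Fintype.card V * Fintype.card E))
          = (q * ∑ z : E → Sig, ∏ w, f w z)^2 * q^(Fintype.card V * Fintype.card E) := by
            ring
        _ ≤ (∑ z : E → Sig, ∏ w, g w z)^2 * q^(Fintype.card V * Fintype.card E) := h2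
        _ ≤ q^(2 * Fintype.card E) * (q^2 * ∏ w, ∑ z : E → Sig, (f w z)^2) := hIH
        _ = q^2 * (q^(2 * Fintype.card E) * ∏ w, ∑ z : E → Sig, (f w z)^2) := by ring
    exact le_of_mul_le_mul_left h3 (by positivity)


variable {ℓ : ℕ}

def InvOn (ℓ : ℕ) (s : Finset (Fin ℓ)) : Finset (Fin ℓ → Fin ℓ) :=
  univ.filter fun σ => (∀ k ∈ s, σ k ∈ s ∧ σ (σ k) = k ∧ σ k ≠ k) ∧ ∀ k ∉ s, σ k = k

lemma invOn_card (s : Finset (Fin ℓ)) : (InvOn ℓ s).card ≤ Nat.doubleFactorial (s.card - 1) := by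
  induction s using Finset.strongInduction with
  | _ s ih =>
  rcases s.eq_empty_or_nonempty with rfl | hs
  · have hsub : InvOn ℓ ∅ ⊆ {fun k => k} := by
      intro σ hσ
      rw [InvOn, Finset.mem_filter] at hσ
      rw [Finset.mem_singleton]
      funext k
      exact hσ.2.2 k (Finset.notMem_empty k)
    calc (InvOn ℓ ∅).card ≤ _ := Finset.card_le_card hsub
      _ ≤ _ := by simp
  · obtain ⟨a, ha⟩ := hs
    have hsub : InvOn ℓ s ⊆ (s.erase a).biUnion (fun b =>
        (InvOn ℓ ((s.erase a).erase b)).image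
          (fun τ => Function.update (Function.update τ a b) b a)) := by
      intro σ hσ
      rw [InvOn, Finset.mem_filter] at hσ
      obtain ⟨-, hmem, hout⟩ := hσ
      obtain ⟨hσa, hσσa, hσane⟩ := hmem a ha
      set b := σ a with hb
      have hbmem : b ∈ s.erase a := Finset.mem_erase.mpr ⟨hσane, hσa⟩
      rw [Finset.mem_biUnion]
      refine ⟨b, hbmem, ?_⟩
      rw [Finset.mem_image]
      set τ : Fin ℓ → Fin ℓ := fun k => if k = a ∨ k = b then k else σ k with hτ
      have hba : b ≠ a := hσane
      refine ⟨τ, ?_, ?_⟩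
      · rw [InvOn, Finset.mem_filter]
        refine ⟨Finset.mem_univ _, ?_, ?_⟩
        · intro k hk
          obtain ⟨hkb, hk2⟩ := Finset.mem_erase.mp hk
          obtain ⟨hka, hks⟩ := Finset.mem_erase.mp hk2
          have hτk : τ k = σ k := by rw [hτ]; simp [hka, hkb]
          obtain ⟨hσk, hσσk, hσkne⟩ := hmem k hks
          have hσka : σ k ≠ a := by
            intro h
            apply hkb
            have h2 := congrArg σ h
            rw [hσσk] at h2
            exact h2.trans hb.symm
          have hσkb : σ k ≠ b := by
            intro h
            apply hka
            have h2 := congrArg σ h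
            rw [hσσk, hσσa] at h2
            exact h2
          refine ⟨?_, ?_, ?_⟩
          · rw [hτk]
            exact Finset.mem_erase.mpr ⟨hσkb, Finset.mem_erase.mpr ⟨hσka, hσk⟩⟩
          · rw [hτk]
            have : τ (σ k) = σ (σ k) := by rw [hτ]; simp [hσka, hσkb]
            rw [this, hσσk]
          · rw [hτk]; exact hσkne
        · intro k hk
          by_cases hka : k = a
          · rw [hτ]; simp [hka]
          · by_cases hkb : k = b
            · rw [hτ]; simp [hkb]
            · have hks : k ∉ s := by
                intro h
                exact hk (Finset.mem_erase.mpr ⟨hkb, Finset.mem_erase.mpr ⟨hka, h⟩⟩)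
              rw [hτ]
              simp only [hka, hkb, or_self, if_false]
              exact hout k hks
      · funext k
        by_cases hka : k = a
        · subst hka
          rw [Function.update_of_ne (Ne.symm hba), Function.update_self]
        · by_cases hkb : k = b
          · subst hkb
            rw [Function.update_self]
            exact hσσa.symm
          · rw [Function.update_of_ne hkb, Function.update_of_ne hka]
            rw [hτ]
            simp [hka, hkb]
    have hbound : (InvOn ℓ s).card ≤ (s.card - 1) * Nat.doubleFactorial (s.card - 3) := by
      calc (InvOn ℓ s).card ≤ _ := Finset.card_le_card hsub
        _ ≤ ∑ b ∈ s.erase a, ((InvOn ℓ ((s.erase a).erase b)).image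
              (fun τ => Function.update (Function.update τ a b) b a)).card :=
          Finset.card_biUnion_le
        _ ≤ ∑ b ∈ s.erase a, (InvOn ℓ ((s.erase a).erase b)).card :=
          Finset.sum_le_sum fun b _ => Finset.card_image_le
        _ ≤ ∑ b ∈ s.erase a, Nat.doubleFactorial (s.card - 3) := by
          apply Finset.sum_le_sum
          intro b hb
          have hss : (s.erase a).erase b ⊂ s :=
            lt_of_le_of_lt (Finset.erase_subset _ _) (Finset.erase_ssubset ha)
          have := ih _ hss
          have hcard : ((s.erase a).erase b).card = s.card - 2 := by
            rw [Finset.card_erase_of_mem hb, Finset.card_erase_of_mem ha]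
            omega
          rw [hcard] at this
          have h3 : s.card - 2 - 1 = s.card - 3 := by omega
          rw [h3] at this
          exact this
        _ = (s.erase a).card * Nat.doubleFactorial (s.card - 3) := by
          rw [Finset.sum_const, smul_eq_mul]
        _ = (s.card - 1) * Nat.doubleFactorial (s.card - 3) := by
          rw [Finset.card_erase_of_mem ha]
    refine le_trans hbound ?_
    have hs1 : 1 ≤ s.card := Finset.card_pos.mpr ⟨a, ha⟩
    rcases Nat.lt_or_ge s.card 3 with h3 | h3
    · interval_cases h : s.card <;> simp_all [Nat.doubleFactorial]
    · obtain ⟨t, ht⟩ : ∃ t, s.card = t + 3 := ⟨s.card - 3, by omega⟩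
      rw [ht]
      have h1 : t + 3 - 1 = t + 2 := by omega
      have h2 : t + 3 - 3 = t := by omega
      rw [h1, h2, Nat.doubleFactorial_add_two]

lemma invOn_exists {Sig : Type} [DecidableEq Sig] (s : Finset (Fin ℓ)) (y : Fin ℓ → Sig)
    (hy : ∀ a : Sig, Even ((s.filter fun k => y k = a).card)) :
    ∃ σ ∈ InvOn ℓ s, ∀ k ∈ s, y (σ k) = y k := by
  induction s using Finset.strongInduction with
  | _ s ih =>
  rcases s.eq_empty_or_nonempty with rfl | hs
  · refine ⟨fun k => k, ?_, by simp⟩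
    rw [InvOn, Finset.mem_filter]
    refine ⟨Finset.mem_univ _, ?_, fun k _ => rfl⟩
    intro k hk
    exact absurd hk (Finset.notMem_empty k)
  · obtain ⟨a, ha⟩ := hs
    have hafib : a ∈ s.filter (fun k => y k = y a) := Finset.mem_filter.mpr ⟨ha, rfl⟩
    have h2 : 1 < (s.filter (fun k => y k = y a)).card := by
      rcases hy (y a) with ⟨d, hd⟩
      have : 0 < (s.filter (fun k => y k = y a)).card := Finset.card_pos.mpr ⟨a, hafib⟩
      omega
    obtain ⟨b, hbfib, hba⟩ := Finset.exists_mem_ne h2 a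
    obtain ⟨hbs, hyb⟩ := Finset.mem_filter.mp hbfib
    set s' := (s.erase a).erase b with hs'
    have hss : s' ⊂ s := lt_of_le_of_lt (Finset.erase_subset _ _) (Finset.erase_ssubset ha)
    have hbea : b ∈ s.erase a := Finset.mem_erase.mpr ⟨hba, hbs⟩
    have hy' : ∀ c : Sig, Even ((s'.filter fun k => y k = c).card) := by
      intro c
      by_cases hc : c = y a
      · subst hc
        have heq : s'.filter (fun k => y k = y a)
            = ((s.filter (fun k => y k = y a)).erase a).erase b := by
          ext k
          simp only [hs', Finset.mem_filter, Finset.mem_erase]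
          tauto
        rw [heq, Finset.card_erase_of_mem, Finset.card_erase_of_mem hafib]
        · rcases hy (y a) with ⟨d, hd⟩
          exact ⟨d - 1, by omega⟩
        · exact Finset.mem_erase.mpr ⟨hba, hbfib⟩
      · have heq : s'.filter (fun k => y k = c) = s.filter (fun k => y k = c) := by
          ext k
          simp only [hs', Finset.mem_filter, Finset.mem_erase]
          constructor
          · tauto
          · rintro ⟨hks, hyk⟩
            refine ⟨⟨?_, ?_, hks⟩, hyk⟩
            · rintro rfl; rw [hyb] at hyk; exact hc hyk.symm
            · rintro rfl; exact hc hyk.symm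
        rw [heq]; exact hy c
    obtain ⟨σ', hσ'mem, hσ'y⟩ := ih s' hss hy'
    rw [InvOn, Finset.mem_filter] at hσ'mem
    obtain ⟨-, hmem', hout'⟩ := hσ'mem
    set σ := Function.update (Function.update σ' a b) b a with hσdef
    have hσa : σ a = b := by
      rw [hσdef, Function.update_of_ne (Ne.symm hba), Function.update_self]
    have hσb : σ b = a := by rw [hσdef, Function.update_self]
    have hσk : ∀ k, k ≠ a → k ≠ b → σ k = σ' k := by
      intro k hka hkb
      rw [hσdef, Function.update_of_ne hkb, Function.update_of_ne hka]
    have hs'mem : ∀ k, k ∈ s' ↔ (k ∈ s ∧ k ≠ a ∧ k ≠ b) := by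
      intro k
      simp only [hs', Finset.mem_erase]
      tauto
    refine ⟨σ, ?_, ?_⟩
    · rw [InvOn, Finset.mem_filter]
      refine ⟨Finset.mem_univ _, ?_, ?_⟩
      · intro k hk
        by_cases hka : k = a
        · subst hka
          rw [hσa, hσb]
          exact ⟨hbs, rfl, hba⟩
        · by_cases hkb : k = b
          · subst hkb
            rw [hσb, hσa]
            exact ⟨ha, rfl, (Ne.symm hba)⟩
          · have hks' : k ∈ s' := (hs'mem k).mpr ⟨hk, hka, hkb⟩
            obtain ⟨hm1, hm2, hm3⟩ := hmem' k hks'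
            obtain ⟨hm1s, hm1a, hm1b⟩ := (hs'mem _).mp hm1
            rw [hσk k hka hkb]
            refine ⟨hm1s, ?_, hm3⟩
            rw [hσk _ hm1a hm1b, hm2]
      · intro k hk
        have hka : k ≠ a := by rintro rfl; exact hk ha
        have hkb : k ≠ b := by rintro rfl; exact hk hbs
        rw [hσk k hka hkb]
        apply hout'
        rw [hs'mem]
        tauto
    · intro k hk
      by_cases hka : k = a
      · subst hka; rw [hσa, hyb]
      · by_cases hkb : k = b
        · subst hkb; rw [hσb, hyb]
        · rw [hσk k hka hkb]
          exact hσ'y k ((hs'mem k).mpr ⟨hk, hka, hkb⟩)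


set_option maxHeartbeats 1600000 in
lemma per_matching {Sig : Type} [Fintype Sig] [DecidableEq Sig] [Nonempty Sig] (c ℓ : ℕ) (hℓ2 : 2 ≤ ℓ)
    (σ : Fin c → Fin ℓ → Fin ℓ)
    (hinv : ∀ i k, σ i (σ i k) = k) (hnfp : ∀ i k, σ i k ≠ k)
    (F : Fin ℓ → (Fin c → Sig) → ℝ) (hF : ∀ k y, 0 ≤ F k y) :
    ∑ x ∈ (univ : Finset (Fin ℓ → Fin c → Sig)).filter
        (fun x => ∀ (i : Fin c) (k : Fin ℓ), x (σ i k) i = x k i),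
      ∏ k, F k (x k)
      ≤ ∏ k, Real.sqrt (∑ y : Fin c → Sig, (F k y)^2) := by
  classical
  set q : ℝ := (Fintype.card Sig : ℝ) with hq
  have hq0 : 0 < q := by rw [hq]; exact_mod_cast Fintype.card_pos
  set rep : Fin c → Fin ℓ → Fin ℓ := fun i k => if k ≤ σ i k then k else σ i k with hrep
  have hrep_le : ∀ i k, rep i k ≤ σ i (rep i k) := by
    intro i k
    rw [hrep]; dsimp only
    by_cases h : k ≤ σ i k
    · rw [if_pos h]; exact h
    · rw [if_neg h, hinv]
      exact le_of_not_ge h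
  have hrep_or : ∀ i k, rep i k = k ∨ rep i k = σ i k := by
    intro i k
    rw [hrep]; dsimp only
    by_cases h : k ≤ σ i k
    · left; rw [if_pos h]
    · right; rw [if_neg h]
  have hrep_sig : ∀ i k, rep i (σ i k) = rep i k := by
    intro i k
    rw [hrep]; dsimp only
    rw [hinv]
    by_cases h : k ≤ σ i k
    · rw [if_pos h]
      have hlt : ¬ (σ i k ≤ k) := by
        intro h2
        exact hnfp i k (le_antisymm h2 h)
      rw [if_neg hlt]
    · rw [if_neg h]
      have hle : σ i k ≤ k := le_of_not_ge h
      rw [if_pos hle]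
  have hrep_fix : ∀ i j, j ≤ σ i j → rep i j = j := by
    intro i j h
    rw [hrep]; dsimp only; rw [if_pos h]
  -- the edge type
  set E' := {p : Fin c × Fin ℓ // p.2 ≤ σ p.1 p.2} with hE'
  set ι : Fin ℓ → Fin c → E' := fun k i => ⟨(i, rep i k), hrep_le i k⟩ with hι
  have hι_inj : ∀ k, Function.Injective (ι k) := by
    intro k i i' h
    have := congrArg (fun e : E' => e.1.1) h
    exact this
  set f : Fin ℓ → (E' → Sig) → ℝ := fun k z => F k (z ∘ ι k) with hf
  set legs : Fin ℓ → Finset E' := fun k => univ.filter (fun e : E' => rep e.1.1 k = e.1.2)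
    with hlegs
  have hmemlegs : ∀ k (e : E'), e ∈ legs k ↔ rep e.1.1 k = e.1.2 := by
    intro k e
    rw [hlegs]; simp
  have hnn : ∀ k z, 0 ≤ f k z := fun k z => hF k _
  have hdep : ∀ k z z', (∀ e ∈ legs k, z e = z' e) → f k z = f k z' := by
    intro k z z' hzz
    rw [hf]; dsimp only
    congr 1
    funext i
    have : ι k i ∈ legs k := by
      rw [hmemlegs]
    exact hzz _ this
  have hcard : ∀ e : E', ((univ : Finset (Fin ℓ)).filter fun k => e ∈ legs k).card = 2 := by
    intro e
    have hset : ((univ : Finset (Fin ℓ)).filter fun k => e ∈ legs k)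
        = {e.1.2, σ e.1.1 e.1.2} := by
      ext k
      simp only [Finset.mem_filter, Finset.mem_univ, true_and, Finset.mem_insert,
        Finset.mem_singleton, hmemlegs]
      constructor
      · intro h
        rcases hrep_or e.1.1 k with h2 | h2
        · left; rw [← h, h2]
        · right
          have : σ e.1.1 (rep e.1.1 k) = σ e.1.1 e.1.2 := by rw [h]
          rw [h2, hinv] at this
          exact this
      · rintro (rfl | rfl)
        · exact hrep_fix _ _ e.2
        · rw [hrep_sig]
          exact hrep_fix _ _ e.2
    rw [hset]
    exact Finset.card_pair (Ne.symm (hnfp e.1.1 e.1.2))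
  -- cardinality of E'
  have hNcard : 2 * Fintype.card E' = c * ℓ := by
    have hsig : Fintype.card E' = ∑ i : Fin c, (univ.filter fun j : Fin ℓ => j ≤ σ i j).card := by
      have e : E' ≃ (Σ i : Fin c, {j : Fin ℓ // j ≤ σ i j}) :=
        { toFun := fun p => ⟨p.1.1, p.1.2, p.2⟩
          invFun := fun q => ⟨(q.1, q.2.1), q.2.2⟩
          left_inv := fun p => rfl
          right_inv := fun q => rfl }
      rw [Fintype.card_congr e, Fintype.card_sigma]
      congr 1
      funext i
      rw [Fintype.card_subtype]
    have hper : ∀ i : Fin c, 2 * (univ.filter fun j : Fin ℓ => j ≤ σ i j).card = ℓ := by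
      intro i
      have h1 : (univ.filter fun j : Fin ℓ => j ≤ σ i j)
          = (univ.filter fun j : Fin ℓ => j < σ i j) := by
        apply Finset.filter_congr
        intro j _
        constructor
        · intro h; exact lt_of_le_of_ne h (Ne.symm (hnfp i j))
        · intro h; exact le_of_lt h
      have h2 : (univ.filter fun j : Fin ℓ => ¬ j ≤ σ i j)
          = (univ.filter fun j : Fin ℓ => σ i j < j) := by
        apply Finset.filter_congr
        intro j _
        constructor
        · intro h; exact lt_of_not_ge h
        · intro h; exact not_le_of_gt h
      have hbij : (univ.filter fun j : Fin ℓ => j < σ i j).card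
          = (univ.filter fun j : Fin ℓ => σ i j < j).card := by
        apply Finset.card_bij (fun j _ => σ i j)
        · intro j hj
          simp only [Finset.mem_filter, Finset.mem_univ, true_and] at hj ⊢
          rw [hinv]
          exact hj
        · intro j hj j' hj' h
          have := congrArg (σ i) h
          rw [hinv, hinv] at this
          exact this
        · intro j hj
          simp only [Finset.mem_filter, Finset.mem_univ, true_and] at hj ⊢
          exact ⟨σ i j, by rw [hinv]; exact hj, hinv i j⟩
      have hsplit := Finset.card_filter_add_card_filter_not
        (s := (univ : Finset (Fin ℓ))) (p := fun j => j ≤ σ i j)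
      rw [Finset.card_univ, Fintype.card_fin] at hsplit
      rw [h1] at hsplit ⊢
      rw [h2, ← hbij] at hsplit
      omega
    rw [hsig, Finset.mul_sum]
    rw [Finset.sum_congr rfl (fun i _ => hper i)]
    simp [Finset.sum_const, mul_comm]
  -- apply finner
  have hA := finner_aux (V := Fin ℓ) (E := E') (Sig := Sig)
    (((univ : Finset E').filter fun e => ∃ v, e ∈ legs v).card) f legs hnn hdep
    (fun e => Or.inl (hcard e)) (by convert rfl)
  rw [Fintype.card_fin] at hA
  -- bijection between z-space and consistent tuples
  have hbijsum : ∑ z : E' → Sig, ∏ k, f k z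
      = ∑ x ∈ (univ : Finset (Fin ℓ → Fin c → Sig)).filter
          (fun x => ∀ (i : Fin c) (k : Fin ℓ), x (σ i k) i = x k i),
        ∏ k, F k (x k) := by
    apply Finset.sum_nbij' (i := fun z => fun k => z ∘ ι k)
      (j := fun x => fun e : E' => x e.1.2 e.1.1)
    · intro z _
      simp only [Finset.mem_filter, Finset.mem_univ, true_and]
      intro i k
      show z (ι (σ i k) i) = z (ι k i)
      congr 1
      rw [hι]
      apply Subtype.ext
      show (i, rep i (σ i k)) = (i, rep i k)
      rw [hrep_sig]
    · intro x _
      exact Finset.mem_univ _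
    · intro z _
      funext e
      show z (ι e.1.2 e.1.1) = z e
      congr 1
      rw [hι]
      apply Subtype.ext
      show (e.1.1, rep e.1.1 e.1.2) = e.1
      rw [hrep_fix _ _ e.2]
    · intro x hx
      simp only [Finset.mem_filter, Finset.mem_univ, true_and] at hx
      funext k i
      show x (rep i k) i = x k i
      rcases hrep_or i k with h | h
      · rw [h]
      · rw [h]
        exact hx i k
    · intro z _
      rfl
  -- marginalization
  have hmarg : ∀ k, ∑ z : E' → Sig, (f k z)^2
      = q ^ (Fintype.card E' - c) * ∑ y : Fin c → Sig, (F k y)^2 := by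
    intro k
    have := sum_comp_inj (ι k) (hι_inj k) (fun y => (F k y)^2)
    rw [Fintype.card_fin] at this
    exact this
  rw [hbijsum] at hA
  simp_rw [hmarg] at hA
  rw [Finset.prod_mul_distrib, Finset.prod_const, Finset.card_univ, Fintype.card_fin] at hA
  -- exponent arithmetic
  set N := Fintype.card E' with hN
  have hcN : c ≤ N := by
    have h1 : c * 2 ≤ c * ℓ := Nat.mul_le_mul_left c hℓ2
    omega
  have hexp : 2 * N + (N - c) * ℓ = ℓ * N := by
    have h1 : (N - c) * ℓ = N * ℓ - c * ℓ := Nat.sub_mul N c ℓ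
    have h2 : N * 2 ≤ N * ℓ := Nat.mul_le_mul_left N hℓ2
    have h3 : ℓ * N = N * ℓ := Nat.mul_comm ℓ N
    omega
  set S := ∑ x ∈ (univ : Finset (Fin ℓ → Fin c → Sig)).filter
      (fun x => ∀ (i : Fin c) (k : Fin ℓ), x (σ i k) i = x k i),
    ∏ k, F k (x k) with hS
  have hS0 : 0 ≤ S := by
    rw [hS]
    exact Finset.sum_nonneg fun x _ => Finset.prod_nonneg fun k _ => hF k _
  have hA2 : S^2 * q^(ℓ * N) ≤ q^(ℓ * N) * ∏ k : Fin ℓ, ∑ y : Fin c → Sig, (F k y)^2 := by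
    calc S^2 * q^(ℓ * N) ≤ q^(2 * N) * ((q^(N - c))^ℓ * ∏ k : Fin ℓ, ∑ y : Fin c → Sig, (F k y)^2) := hA
      _ = q^(2 * N + (N - c) * ℓ) * ∏ k : Fin ℓ, ∑ y : Fin c → Sig, (F k y)^2 := by
          rw [← pow_mul, ← mul_assoc, ← pow_add]
      _ = q^(ℓ * N) * ∏ k : Fin ℓ, ∑ y : Fin c → Sig, (F k y)^2 := by rw [hexp]
  have hA3 : S^2 ≤ ∏ k : Fin ℓ, ∑ y : Fin c → Sig, (F k y)^2 := by
    have hqpow : 0 < q^(ℓ * N) := pow_pos hq0 _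
    have := hA2
    rw [mul_comm (q^(ℓ*N)) _] at this
    exact le_of_mul_le_mul_right this hqpow
  have hPnn : ∀ k : Fin ℓ, (0:ℝ) ≤ ∑ y : Fin c → Sig, (F k y)^2 :=
    fun k => Finset.sum_nonneg fun y _ => sq_nonneg _
  have hsq : (∏ k : Fin ℓ, Real.sqrt (∑ y : Fin c → Sig, (F k y)^2))^2
      = ∏ k : Fin ℓ, ∑ y : Fin c → Sig, (F k y)^2 := by
    rw [← Finset.prod_pow]
    exact Finset.prod_congr rfl fun k _ => Real.sq_sqrt (hPnn k)
  calc S = Real.sqrt (S^2) := (Real.sqrt_sq hS0).symm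
    _ ≤ Real.sqrt ((∏ k : Fin ℓ, Real.sqrt (∑ y : Fin c → Sig, (F k y)^2))^2) := by
        apply Real.sqrt_le_sqrt
        rw [hsq]
        exact hA3
    _ = ∏ k : Fin ℓ, Real.sqrt (∑ y : Fin c → Sig, (F k y)^2) := by
        rw [Real.sqrt_sq (Finset.prod_nonneg fun k _ => Real.sqrt_nonneg _)]

/-- Weighted collision bound: the sum over all tuples
`(x₁,…,x_ℓ) ∈ A₁ × ⋯ × A_ℓ` whose position-character sets have empty symmetric difference
(every character occurs an even number of times in every position) of `∏ w_k(x_k)` is at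
most `((ℓ−1)‼)^c · ∏_k √(Σ_{x∈A_k} w_k(x)²)`. -/
theorem weighted_collision_bound
    (Sig : Type) [Fintype Sig] [DecidableEq Sig] (c ℓ : ℕ) (hc : 1 ≤ c)
    (hℓ2 : 2 ≤ ℓ) (hℓeven : Even ℓ)
    (w : Fin ℓ → (Fin c → Sig) → ℝ) (A : Fin ℓ → Finset (Fin c → Sig)) :
    ∑ x ∈ (Fintype.piFinset fun k : Fin ℓ => A k).filter
        (fun x : Fin ℓ → (Fin c → Sig) =>
          ∀ (i : Fin c) (a : Sig), Even (Finset.univ.filter (fun kk : Fin ℓ => x kk i = a)).card),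
        ∏ kk : Fin ℓ, w kk (x kk) ≤
      (Nat.doubleFactorial (ℓ - 1) : ℝ) ^ c * ∏ kk : Fin ℓ, Real.sqrt (∑ y ∈ A kk, w kk y ^ 2) := by
  classical
  rcases isEmpty_or_nonempty Sig with hSig | hSig
  · -- empty alphabet
    have hA : ∀ k, A k = ∅ := by
      intro k
      apply Finset.eq_empty_of_forall_notMem
      intro y _
      exact (hSig.false (y ⟨0, by omega⟩)).elim
    have hL : ∑ x ∈ (Fintype.piFinset fun k : Fin ℓ => A k).filter
        (fun x : Fin ℓ → (Fin c → Sig) =>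
          ∀ (i : Fin c) (a : Sig), Even (Finset.univ.filter (fun kk : Fin ℓ => x kk i = a)).card),
        ∏ kk : Fin ℓ, w kk (x kk) = 0 := by
      apply Finset.sum_eq_zero
      intro x hx
      have hx1 := (Finset.mem_filter.mp hx).1
      have := (Fintype.mem_piFinset.mp hx1) ⟨0, by omega⟩
      rw [hA] at this
      exact absurd this (Finset.notMem_empty _)
    rw [hL]
    have hR : ∏ kk : Fin ℓ, Real.sqrt (∑ y ∈ A kk, w kk y ^ 2) = 0 := by
      have : ∀ kk : Fin ℓ, Real.sqrt (∑ y ∈ A kk, w kk y ^ 2) = 0 := by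
        intro kk; rw [hA kk]; simp
      rw [Finset.prod_congr rfl (fun kk _ => this kk), Finset.prod_const, zero_pow]
      simp; omega
    rw [hR, mul_zero]
  · -- main case
    set F : Fin ℓ → (Fin c → Sig) → ℝ := fun k y => if y ∈ A k then |w k y| else 0 with hF
    have hF0 : ∀ k y, 0 ≤ F k y := by
      intro k y
      rw [hF]; dsimp only
      split
      · exact abs_nonneg _
      · exact le_refl 0
    set Cond := (univ : Finset (Fin ℓ → Fin c → Sig)).filter
        (fun x => ∀ (i : Fin c) (a : Sig),
          Even (Finset.univ.filter (fun kk : Fin ℓ => x kk i = a)).card) with hCond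
    -- Step I
    have hstep1 : ∑ x ∈ (Fintype.piFinset fun k : Fin ℓ => A k).filter
        (fun x : Fin ℓ → (Fin c → Sig) =>
          ∀ (i : Fin c) (a : Sig), Even (Finset.univ.filter (fun kk : Fin ℓ => x kk i = a)).card),
        ∏ kk : Fin ℓ, w kk (x kk)
        ≤ ∑ x ∈ Cond, ∏ kk : Fin ℓ, F kk (x kk) := by
      calc ∑ x ∈ (Fintype.piFinset fun k : Fin ℓ => A k).filter
            (fun x : Fin ℓ → (Fin c → Sig) =>
              ∀ (i : Fin c) (a : Sig),
                Even (Finset.univ.filter (fun kk : Fin ℓ => x kk i = a)).card),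
            ∏ kk : Fin ℓ, w kk (x kk)
          ≤ ∑ x ∈ (Fintype.piFinset fun k : Fin ℓ => A k).filter
            (fun x : Fin ℓ → (Fin c → Sig) =>
              ∀ (i : Fin c) (a : Sig),
                Even (Finset.univ.filter (fun kk : Fin ℓ => x kk i = a)).card),
            ∏ kk : Fin ℓ, F kk (x kk) := by
            apply Finset.sum_le_sum
            intro x hx
            have hx1 := Fintype.mem_piFinset.mp (Finset.mem_filter.mp hx).1
            calc ∏ kk : Fin ℓ, w kk (x kk) ≤ |∏ kk : Fin ℓ, w kk (x kk)| := le_abs_self _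
              _ = ∏ kk : Fin ℓ, |w kk (x kk)| := Finset.abs_prod _ _
              _ = ∏ kk : Fin ℓ, F kk (x kk) := by
                  apply Finset.prod_congr rfl
                  intro kk _
                  rw [hF]; dsimp only
                  rw [if_pos (hx1 kk)]
        _ ≤ ∑ x ∈ Cond, ∏ kk : Fin ℓ, F kk (x kk) := by
            apply Finset.sum_le_sum_of_subset_of_nonneg
            · rw [hCond]
              exact Finset.filter_subset_filter _ (Finset.subset_univ _)
            · intro x _ _
              exact Finset.prod_nonneg fun kk _ => hF0 kk _
    -- Step II : covering by matchings
    set SS := Fintype.piFinset (fun _ : Fin c => InvOn ℓ univ) with hSS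
    have hcover : ∀ x ∈ Cond, ∃ σv ∈ SS,
        (∀ (i : Fin c) (k : Fin ℓ), x (σv i k) i = x k i) := by
      intro x hx
      have hx2 := (Finset.mem_filter.mp hx).2
      have hex : ∀ i : Fin c, ∃ σ ∈ InvOn ℓ univ, ∀ k ∈ (univ : Finset (Fin ℓ)),
          x (σ k) i = x k i := by
        intro i
        exact invOn_exists univ (fun k => x k i) (fun a => hx2 i a)
      choose σv hσmem hσcons using hex
      refine ⟨σv, Fintype.mem_piFinset.mpr hσmem, ?_⟩
      intro i k
      exact hσcons i k (Finset.mem_univ k)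
    have hstep2 : ∑ x ∈ Cond, ∏ kk : Fin ℓ, F kk (x kk)
        ≤ ∑ σv ∈ SS, ∑ x ∈ (univ : Finset (Fin ℓ → Fin c → Sig)).filter
            (fun x => ∀ (i : Fin c) (k : Fin ℓ), x (σv i k) i = x k i),
          ∏ kk : Fin ℓ, F kk (x kk) := by
      have h1 : ∑ x ∈ Cond, ∏ kk : Fin ℓ, F kk (x kk)
          ≤ ∑ x ∈ Cond, ∑ σv ∈ SS,
            (if (∀ (i : Fin c) (k : Fin ℓ), x (σv i k) i = x k i)
              then ∏ kk : Fin ℓ, F kk (x kk) else 0) := by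
        apply Finset.sum_le_sum
        intro x hx
        obtain ⟨σv₀, hσv₀, hcons⟩ := hcover x hx
        have := Finset.single_le_sum (f := fun σv =>
          (if (∀ (i : Fin c) (k : Fin ℓ), x (σv i k) i = x k i)
            then ∏ kk : Fin ℓ, F kk (x kk) else 0))
          (fun σv _ => by
            split
            · exact Finset.prod_nonneg fun kk _ => hF0 kk _
            · exact le_refl 0) hσv₀
        rw [if_pos hcons] at this
        exact this
      refine le_trans h1 ?_
      rw [Finset.sum_comm]
      apply Finset.sum_le_sum
      intro σv _
      calc ∑ x ∈ Cond, (if (∀ (i : Fin c) (k : Fin ℓ), x (σv i k) i = x k i)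
            then ∏ kk : Fin ℓ, F kk (x kk) else 0)
          ≤ ∑ x : Fin ℓ → Fin c → Sig, (if (∀ (i : Fin c) (k : Fin ℓ), x (σv i k) i = x k i)
            then ∏ kk : Fin ℓ, F kk (x kk) else 0) := by
            apply Finset.sum_le_sum_of_subset_of_nonneg
            · rw [hCond]; exact Finset.filter_subset _ _
            · intro x _ _
              split
              · exact Finset.prod_nonneg fun kk _ => hF0 kk _
              · exact le_refl 0
        _ = ∑ x ∈ (univ : Finset (Fin ℓ → Fin c → Sig)).filter
            (fun x => ∀ (i : Fin c) (k : Fin ℓ), x (σv i k) i = x k i),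
          ∏ kk : Fin ℓ, F kk (x kk) := (Finset.sum_filter _ _).symm
    -- Step III : per matching bound
    have hstep3 : ∀ σv ∈ SS,
        ∑ x ∈ (univ : Finset (Fin ℓ → Fin c → Sig)).filter
            (fun x => ∀ (i : Fin c) (k : Fin ℓ), x (σv i k) i = x k i),
          ∏ kk : Fin ℓ, F kk (x kk)
        ≤ ∏ kk : Fin ℓ, Real.sqrt (∑ y ∈ A kk, w kk y ^ 2) := by
      intro σv hσv
      have hmem := Fintype.mem_piFinset.mp hσv
      have hprop : ∀ i, (∀ k ∈ (univ : Finset (Fin ℓ)),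
          σv i k ∈ (univ : Finset (Fin ℓ)) ∧ σv i (σv i k) = k ∧ σv i k ≠ k)
          ∧ ∀ k ∉ (univ : Finset (Fin ℓ)), σv i k = k := by
        intro i
        have := hmem i
        rw [InvOn, Finset.mem_filter] at this
        exact this.2
      have hinv : ∀ i k, σv i (σv i k) = k := fun i k =>
        ((hprop i).1 k (Finset.mem_univ k)).2.1
      have hnfp : ∀ i k, σv i k ≠ k := fun i k =>
        ((hprop i).1 k (Finset.mem_univ k)).2.2
      have hper := per_matching c ℓ hℓ2 σv hinv hnfp F hF0
      refine le_trans hper (le_of_eq ?_)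
      apply Finset.prod_congr rfl
      intro kk _
      congr 1
      have : ∀ y : Fin c → Sig, (F kk y)^2 = if y ∈ A kk then (w kk y)^2 else 0 := by
        intro y
        rw [hF]; dsimp only
        split
        · rw [sq_abs]
        · rw [zero_pow]; omega
      rw [Fintype.sum_congr _ _ this]
      rw [Finset.sum_ite_mem, Finset.univ_inter]
    -- Step IV : collect
    have hcardSS : (SS.card : ℝ) ≤ ((Nat.doubleFactorial (ℓ - 1) : ℕ) : ℝ)^c := by
      rw [hSS, Fintype.card_piFinset]
      rw [Finset.prod_const, Finset.card_univ, Fintype.card_fin]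
      have h1 : (InvOn ℓ univ).card ≤ Nat.doubleFactorial (ℓ - 1) := by
        have := invOn_card (ℓ := ℓ) univ
        rw [Finset.card_univ, Fintype.card_fin] at this
        exact this
      exact_mod_cast Nat.pow_le_pow_left h1 c
    have hB0 : 0 ≤ ∏ kk : Fin ℓ, Real.sqrt (∑ y ∈ A kk, w kk y ^ 2) :=
      Finset.prod_nonneg fun kk _ => Real.sqrt_nonneg _
    calc ∑ x ∈ (Fintype.piFinset fun k : Fin ℓ => A k).filter
          (fun x : Fin ℓ → (Fin c → Sig) =>
            ∀ (i : Fin c) (a : Sig),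
              Even (Finset.univ.filter (fun kk : Fin ℓ => x kk i = a)).card),
          ∏ kk : Fin ℓ, w kk (x kk)
        ≤ ∑ x ∈ Cond, ∏ kk : Fin ℓ, F kk (x kk) := hstep1
      _ ≤ ∑ σv ∈ SS, ∑ x ∈ (univ : Finset (Fin ℓ → Fin c → Sig)).filter
            (fun x => ∀ (i : Fin c) (k : Fin ℓ), x (σv i k) i = x k i),
          ∏ kk : Fin ℓ, F kk (x kk) := hstep2
      _ ≤ ∑ _σv ∈ SS, ∏ kk : Fin ℓ, Real.sqrt (∑ y ∈ A kk, w kk y ^ 2) :=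
          Finset.sum_le_sum hstep3
      _ = (SS.card : ℝ) * ∏ kk : Fin ℓ, Real.sqrt (∑ y ∈ A kk, w kk y ^ 2) := by
          rw [Finset.sum_const, nsmul_eq_mul]
      _ ≤ (Nat.doubleFactorial (ℓ - 1) : ℝ) ^ c
            * ∏ kk : Fin ℓ, Real.sqrt (∑ y ∈ A kk, w kk y ^ 2) := by
          apply mul_le_mul_of_nonneg_right _ hB0
          exact_mod_cast hcardSS
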